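/- (Guaranteed utility-loss bound via the choice of μ) Let F = {(x,u) ∈ ℝ^n × ℝ^p : x = A x + B u and C₁ x = r}, suppose (x*, u*) ∈ F minimizes J over F and (x_p, u_p) ∈ F minimizes J_p over F, and set ε = J(x_p, u_p) − J(x*, u*). If u*ᵀ S u* > 0, ε̄ ≥ 0, and μ = ε̄ / (u*ᵀ S u*), then ε ≤ ε̄; i.e., this choice of the regularization parameter guarantees that the utility cost increase is at most ε̄. -/

import Mathlib

open Matrix

/-- **Guaranteed utility-loss bound via the choice of μ.**
If `u*ᵀSu* > 0`, `ε̄ ≥ 0` and `μ = ε̄ / (u*ᵀSu*)`, then the utility cost increase `ε`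
incurred by the privacy-regularized optimum is at most `ε̄`. -/
theorem utility_loss_guarantee
    (n p q : ℕ)
    (A : Matrix (Fin n) (Fin n) ℝ) (B : Matrix (Fin n) (Fin p) ℝ)
    (C₁ : Matrix (Fin q) (Fin n) ℝ) (r : Fin q → ℝ)
    (Q : Matrix (Fin n) (Fin n) ℝ) (R : Matrix (Fin p) (Fin p) ℝ)
    (S : Matrix (Fin p) (Fin p) ℝ)
    (hQ : Q.PosDef) (hR : R.PosDef) (hS : S.PosSemidef)
    (μ : ℝ) (hμ : 0 ≤ μ)
    (J Jp : (Fin n → ℝ) → (Fin p → ℝ) → ℝ)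
    (hJ : ∀ x u, J x u = x ⬝ᵥ (Q *ᵥ x) + u ⬝ᵥ (R *ᵥ u))
    (hJp : ∀ x u, Jp x u = J x u + μ * (u ⬝ᵥ (S *ᵥ u)))
    (F : (Fin n → ℝ) → (Fin p → ℝ) → Prop)
    (hF : ∀ x u, F x u ↔ (x = A *ᵥ x + B *ᵥ u ∧ C₁ *ᵥ x = r))
    (xs : Fin n → ℝ) (us : Fin p → ℝ) (xp : Fin n → ℝ) (up : Fin p → ℝ)
    (hstarFeas : F xs us) (hstarOpt : ∀ x u, F x u → J xs us ≤ J x u)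
    (hpFeas : F xp up) (hpOpt : ∀ x u, F x u → Jp xp up ≤ Jp x u)
    (ε δ : ℝ)
    (hε : ε = J xp up - J xs us)
    (hδ : δ = us ⬝ᵥ (S *ᵥ us) - up ⬝ᵥ (S *ᵥ up))
    (εbar : ℝ) (hεbar : 0 ≤ εbar)
    (hSpos : 0 < us ⬝ᵥ (S *ᵥ us))
    (hμval : μ = εbar / (us ⬝ᵥ (S *ᵥ us))) :
    ε ≤ εbar := by
  have h1 := hpOpt xs us hstarFeas
  rw [hJp, hJp] at h1
  have hup : 0 ≤ up ⬝ᵥ (S *ᵥ up) := by simpa using hS.dotProduct_mulVec_nonneg up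
  have : ε ≤ μ * (us ⬝ᵥ (S *ᵥ us)) := by
    nlinarith [mul_nonneg hμ hup]
  rw [hμval] at this
  rw [div_mul_cancel₀ _ (ne_of_gt hSpos)] at this
  exact this
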